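/- Let Γ : ℝ → ℝ³ be a 2π-periodic C³ regular curve with nonvanishing curvature and nonvanishing torsion, i.e. Γ′(t) × Γ″(t) ≠ 0 and ⟨Γ′(t) × Γ″(t), Γ‴(t)⟩ ≠ 0 for all t. Let u be a unit vector with ⟨Γ′(t) × Γ″(t), u⟩ ≠ 0 for all t (so the planar projection Γ_u has no inflections). Then for every point p ∈ ℝ³ there exists t ∈ [0, 2π] with ⟨Γ(t) − p, Γ′(t) × u⟩ = 0; that is, the tangent lines of Γ_u cover the whole plane orthogonal to u, so Γ_u cannot be locally star-shaped. In particular, a closed curve with nonvanishing curvature and torsion cannot project onto a strictly convex planar curve. (Theorem 1.3 for curves with nonvanishing torsion.) -/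

import Mathlib

open Real intervalIntegral

noncomputable section

/-- The cross product on `EuclideanSpace ℝ (Fin 3)`. -/
def cross3 (a b : EuclideanSpace ℝ (Fin 3)) : EuclideanSpace ℝ (Fin 3) :=
  (EuclideanSpace.equiv (Fin 3) ℝ).symm
    (crossProduct ((EuclideanSpace.equiv (Fin 3) ℝ) a) ((EuclideanSpace.equiv (Fin 3) ℝ) b))

lemma det3_eq (a b c : EuclideanSpace ℝ (Fin 3)) :
    (inner ℝ (cross3 a b) c : ℝ) =
      (a 1 * b 2 - a 2 * b 1) * c 0 + (a 2 * b 0 - a 0 * b 2) * c 1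
        + (a 0 * b 1 - a 1 * b 0) * c 2 := by
  simp [cross3, cross_apply, PiLp.inner_apply, Fin.sum_univ_three, EuclideanSpace.equiv]
  ring

lemma det3_eq' (a b c : EuclideanSpace ℝ (Fin 3)) :
    (inner ℝ a (cross3 b c) : ℝ) = (inner ℝ (cross3 a b) c : ℝ) := by
  simp [cross3, cross_apply, PiLp.inner_apply, Fin.sum_univ_three, EuclideanSpace.equiv]
  ring

lemma hasDerivAt_comp_proj {f : ℝ → EuclideanSpace ℝ (Fin 3)} {f' : EuclideanSpace ℝ (Fin 3)}
    {t : ℝ} (hf : HasDerivAt f f' t) (i : Fin 3) :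
    HasDerivAt (fun s => f s i) (f' i) t := by
  have := (PiLp.continuousLinearEquiv 2 ℝ (fun _ : Fin 3 => ℝ)).hasFDerivAt.comp_hasDerivAt t hf
  exact hasDerivAt_pi.mp this i

lemma hasDerivAt_det3 {a b c : ℝ → EuclideanSpace ℝ (Fin 3)}
    {a' b' c' : EuclideanSpace ℝ (Fin 3)} {t : ℝ}
    (ha : HasDerivAt a a' t) (hb : HasDerivAt b b' t) (hc : HasDerivAt c c' t) :
    HasDerivAt (fun s => (inner ℝ (cross3 (a s) (b s)) (c s) : ℝ))
      ((inner ℝ (cross3 a' (b t)) (c t) : ℝ) + (inner ℝ (cross3 (a t) b') (c t) : ℝ)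
        + (inner ℝ (cross3 (a t) (b t)) c' : ℝ)) t := by
  simp only [det3_eq]
  have H := fun i => hasDerivAt_comp_proj ha i
  have Hb := fun i => hasDerivAt_comp_proj hb i
  have Hc := fun i => hasDerivAt_comp_proj hc i
  have key := ((((H 1).mul (Hb 2)).sub ((H 2).mul (Hb 1))).mul (Hc 0)).add
    (((((H 2).mul (Hb 0)).sub ((H 0).mul (Hb 2))).mul (Hc 1)).add
      (((((H 0).mul (Hb 1)).sub ((H 1).mul (Hb 0))).mul (Hc 2))))
  convert key using 1
  · rfl
  · rfl
  · funext x; simp only [Pi.add_apply, Pi.sub_apply, Pi.mul_apply]; ring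
  · simp only [Pi.add_apply, Pi.sub_apply, Pi.mul_apply]; ring

lemma periodic_deriv3 {f : ℝ → EuclideanSpace ℝ (Fin 3)} {c : ℝ}
    (h : Function.Periodic f c) : Function.Periodic (deriv f) c := by
  intro x
  have h1 : deriv (fun y => f (y + c)) x = deriv f (x + c) := deriv_comp_add_const f c x
  rw [← h1]
  congr 1
  funext y
  exact h y

/-- Theorem 1.3 for curves with nonvanishing curvature and torsion: if the projection
`Γ_u` has no inflections, its tangent lines cover the whole plane orthogonal to `u`. -/
theorem stmt2
    (Γ : ℝ → EuclideanSpace ℝ (Fin 3))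
    (hΓ : ContDiff ℝ 3 Γ) (hΓper : Function.Periodic Γ (2 * π))
    (hreg : ∀ t, deriv Γ t ≠ 0)
    (hcurv : ∀ t, cross3 (deriv Γ t) (deriv (deriv Γ) t) ≠ 0)
    (htor : ∀ t, (inner ℝ (cross3 (deriv Γ t) (deriv (deriv Γ) t))
      (deriv (deriv (deriv Γ)) t) : ℝ) ≠ 0)
    (u : EuclideanSpace ℝ (Fin 3)) (hu : ‖u‖ = 1)
    (hinfl : ∀ t, (inner ℝ (cross3 (deriv Γ t) (deriv (deriv Γ) t)) u : ℝ) ≠ 0) :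
    ∀ p : EuclideanSpace ℝ (Fin 3), ∃ t ∈ Set.Icc (0 : ℝ) (2 * π),
      (inner ℝ (Γ t - p) (cross3 (deriv Γ t) u) : ℝ) = 0 := by
  intro p
  set D1 := deriv Γ with hD1
  set D2 := deriv D1 with hD2
  set D3 := deriv D2 with hD3
  -- smoothness facts
  have h3 : ContDiff ℝ ((2 : WithTop ℕ∞) + 1) Γ := by
    convert hΓ using 2 <;> norm_num
  have hdiffΓ : Differentiable ℝ Γ := (contDiff_succ_iff_deriv.mp h3).1
  have hc2' : ContDiff ℝ ((1 : WithTop ℕ∞) + 1) D1 := by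
    have := (contDiff_succ_iff_deriv.mp h3).2.2
    exact this.of_le (by norm_num)
  have hdiff1 : Differentiable ℝ D1 := (contDiff_succ_iff_deriv.mp hc2').1
  have hc1 : ContDiff ℝ ((0 : WithTop ℕ∞) + 1) D2 := by
    have := (contDiff_succ_iff_deriv.mp hc2').2.2
    exact this.of_le (by norm_num)
  have hdiff2 : Differentiable ℝ D2 := (contDiff_succ_iff_deriv.mp hc1).1
  have hΓd : ∀ t, HasDerivAt Γ (D1 t) t := fun t => (hdiffΓ t).hasDerivAt
  have hD1d : ∀ t, HasDerivAt D1 (D2 t) t := fun t => (hdiff1 t).hasDerivAt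
  have hD2d : ∀ t, HasDerivAt D2 (D3 t) t := fun t => (hdiff2 t).hasDerivAt
  -- the auxiliary functions
  set g : ℝ → ℝ := fun t => (inner ℝ (cross3 (Γ t - p) (D1 t)) (D2 t) : ℝ) with hgdef
  set c : ℝ → ℝ := fun t => (inner ℝ (cross3 (D1 t) (D2 t)) u : ℝ) with hcdef
  have hc0 : ∀ t, c t ≠ 0 := hinfl
  set P : ℝ → ℝ := fun t => g t / c t with hPdef
  have hgd : ∀ t, HasDerivAt g
      ((inner ℝ (cross3 (Γ t - p) (D1 t)) (D3 t) : ℝ)) t := by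
    intro t
    have := hasDerivAt_det3 ((hΓd t).sub_const p) (hD1d t) (hD2d t)
    have e1 : (inner ℝ (cross3 (D1 t) (D1 t)) (D2 t) : ℝ) = 0 := by
      rw [det3_eq]; ring
    have e2 : (inner ℝ (cross3 (Γ t - p) (D2 t)) (D2 t) : ℝ) = 0 := by
      rw [det3_eq]; ring
    rw [e1, e2] at this
    simpa using this
  have hcd : ∀ t, HasDerivAt c ((inner ℝ (cross3 (D1 t) (D3 t)) u : ℝ)) t := by
    intro t
    have := hasDerivAt_det3 (hD1d t) (hD2d t) (hasDerivAt_const t u)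
    have e1 : (inner ℝ (cross3 (D2 t) (D2 t)) u : ℝ) = 0 := by
      rw [det3_eq]; ring
    have e2 : (inner ℝ (cross3 (D1 t) (D2 t)) (0 : EuclideanSpace ℝ (Fin 3)) : ℝ) = 0 := by
      simp
    rw [e1, e2] at this
    simpa using this
  have hPd : ∀ t, HasDerivAt P
      (((inner ℝ (cross3 (Γ t - p) (D1 t)) (D3 t) : ℝ) * c t
        - g t * (inner ℝ (cross3 (D1 t) (D3 t)) u : ℝ)) / (c t) ^ 2) t :=
    fun t => (hgd t).div (hcd t) (hc0 t)
  -- periodicity of P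
  have hper1 : Function.Periodic D1 (2 * π) := periodic_deriv3 hΓper
  have hper2 : Function.Periodic D2 (2 * π) := periodic_deriv3 hper1
  have hPper : P 0 = P (2 * π) := by
    have e0 : (0 : ℝ) + 2 * π = 2 * π := by ring
    simp only [hPdef, hgdef, hcdef]
    rw [show (2 * π : ℝ) = 0 + 2 * π by ring, hΓper 0, hper1 0, hper2 0]
  -- Rolle
  have h2pi : (0 : ℝ) < 2 * π := by positivity
  obtain ⟨t, ht, hval⟩ := exists_hasDerivAt_eq_zero h2pi
    (fun x _ => (hPd x).continuousAt.continuousWithinAt) hPper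
    (fun x _ => hPd x)
  refine ⟨t, ⟨le_of_lt ht.1, le_of_lt ht.2⟩, ?_⟩
  have hnum : (inner ℝ (cross3 (Γ t - p) (D1 t)) (D3 t) : ℝ) * c t
      - g t * (inner ℝ (cross3 (D1 t) (D3 t)) u : ℝ) = 0 := by
    rcases div_eq_zero_iff.mp hval with h | h
    · exact h
    · exact absurd (pow_eq_zero_iff (by norm_num) |>.mp h) (hc0 t)
  -- key identity: gd*c - g*cd = f * τ
  have hkey : (inner ℝ (cross3 (Γ t - p) (D1 t)) (D3 t) : ℝ) * c t
      - g t * (inner ℝ (cross3 (D1 t) (D3 t)) u : ℝ)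
      = (inner ℝ (cross3 (Γ t - p) (D1 t)) u : ℝ)
        * (inner ℝ (cross3 (D1 t) (D2 t)) (D3 t) : ℝ) := by
    simp only [hgdef, hcdef, det3_eq]
    ring
  rw [hkey] at hnum
  have hf0 : (inner ℝ (cross3 (Γ t - p) (D1 t)) u : ℝ) = 0 :=
    by
      rcases mul_eq_zero.mp hnum with h | h
      · exact h
      · exact absurd h (htor t)
  rw [det3_eq']
  exact hf0
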